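/- Let G be a simple undirected graph with m ≥ 1 edges, degrees kᵢ, and B_{ij} = A_{ij} − kᵢkⱼ/(2m). Let 0 < p_{(2)} + p_{(2)}² − 2p_{(3)} and p_{(3)} ≥ p_{(2)}², and define σₙ² = (p_{(2)}+p_{(2)}²−2p_{(3)})/(2m²) · ∑_{i≠j} B_{ij}² + (p_{(3)}−p_{(2)}²)/m² · ∑_i B_{ii}² and δₙ² = (p_{(2)}+p_{(2)}²−2p_{(3)})/m. Then σₙ² ≥ δₙ² (1 − √2 · max_i kᵢ / √m). -/

import Mathlib

set_option maxHeartbeats 1000000 in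
/-- Lower bound for the variance normalization:
`σₙ² ≥ δₙ² (1 − √2 · max_i k_i / √m)`. -/
theorem stmt9
    {n : ℕ} (hn : 0 < n) (A : Fin n → Fin n → ℝ)
    (hA01 : ∀ i j, i ≠ j → A i j = 0 ∨ A i j = 1)
    (hAdiag : ∀ i, A i i = 0)
    (hAsymm : ∀ i j, A i j = A j i)
    (k : Fin n → ℝ) (hk : ∀ i, k i = ∑ j, A i j)
    (m : ℝ) (hm : 1 ≤ m) (h2m : ∑ i, k i = 2 * m)
    (B : Fin n → Fin n → ℝ)
    (hB : ∀ i j, B i j = A i j - k i * k j / (2 * m))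
    (p2 p3 : ℝ) (hpos : 0 < p2 + p2 ^ 2 - 2 * p3) (hp32 : p2 ^ 2 ≤ p3)
    (σn2 δn2 : ℝ)
    (hσ : σn2 = (p2 + p2 ^ 2 - 2 * p3) / (2 * m ^ 2) *
        (∑ i, ∑ j, if i ≠ j then (B i j) ^ 2 else 0) +
        (p3 - p2 ^ 2) / m ^ 2 * ∑ i, (B i i) ^ 2)
    (hδ : δn2 = (p2 + p2 ^ 2 - 2 * p3) / m) :
    σn2 ≥ δn2 * (1 - Real.sqrt 2 *
      (Finset.univ.sup' ⟨⟨0, hn⟩, Finset.mem_univ _⟩ k) / Real.sqrt m) := by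
  have hm0 : (0:ℝ) < m := lt_of_lt_of_le one_pos hm
  have hA0 : ∀ i j, 0 ≤ A i j := by
    intro i j
    by_cases h : i = j
    · simp [h, hAdiag]
    · rcases hA01 i j h with h1 | h1 <;> simp [h1]
  have hAsq : ∀ i j, A i j ^ 2 = A i j := by
    intro i j
    by_cases h : i = j
    · simp [h, hAdiag]
    · rcases hA01 i j h with h1 | h1 <;> simp [h1]
  have hk0 : ∀ i, 0 ≤ k i := fun i => by
    rw [hk]; exact Finset.sum_nonneg fun j _ => hA0 i j
  set K := (Finset.univ.sup' ⟨⟨0, hn⟩, Finset.mem_univ _⟩ k) with hKdef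
  have hKk : ∀ i, k i ≤ K := fun i => Finset.le_sup' k (Finset.mem_univ i)
  have hK0 : (0:ℝ) ≤ K := le_trans (hk0 ⟨0, hn⟩) (hKk _)
  have hsumA : ∑ i, ∑ j, A i j = 2 * m := by
    rw [← h2m]; exact Finset.sum_congr rfl fun i _ => (hk i).symm
  have hsumk2 : ∑ i, (k i) ^ 2 ≤ 2 * m * K := by
    calc ∑ i, (k i) ^ 2 ≤ ∑ i, k i * K :=
          Finset.sum_le_sum fun i _ => by nlinarith [hk0 i, hKk i]
      _ = 2 * m * K := by rw [← Finset.sum_mul, h2m]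
  have hsk2nn : (0:ℝ) ≤ ∑ i, (k i) ^ 2 := Finset.sum_nonneg fun i _ => sq_nonneg _
  set Q := ∑ i, ∑ j, A i j * (k i * k j) with hQdef
  have hQ0 : 0 ≤ Q :=
    Finset.sum_nonneg fun i _ => Finset.sum_nonneg fun j _ =>
      mul_nonneg (hA0 i j) (mul_nonneg (hk0 i) (hk0 j))
  set s2 := Real.sqrt 2 with hs2def
  set sm := Real.sqrt m with hsmdef
  have hsm0 : 0 < sm := Real.sqrt_pos.mpr hm0
  have hsm2 : sm ^ 2 = m := Real.sq_sqrt hm0.le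
  have hs22 : s2 ^ 2 = 2 := Real.sq_sqrt (by norm_num)
  have hs20 : 0 ≤ s2 := Real.sqrt_nonneg 2
  -- Cauchy–Schwarz: Q ≤ 2 √2 K m √m
  have hQrw : Q = ∑ i, k i * (∑ j, A i j * k j) := by
    refine Finset.sum_congr rfl fun i _ => ?_
    rw [Finset.mul_sum]
    exact Finset.sum_congr rfl fun j _ => by ring
  have hrow : ∀ i, (∑ j, A i j * k j) ^ 2 ≤ k i * ∑ j, (k j) ^ 2 := by
    intro i
    have := Finset.sum_mul_sq_le_sq_mul_sq Finset.univ (fun j => A i j) k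
    have hAA : ∑ j, (A i j) ^ 2 = k i := by
      rw [hk]; exact Finset.sum_congr rfl fun j _ => hAsq i j
    rwa [hAA] at this
  have hQsq : Q ^ 2 ≤ (∑ i, (k i) ^ 2) * (2 * m * ∑ i, (k i) ^ 2) := by
    calc Q ^ 2 = (∑ i, k i * (∑ j, A i j * k j)) ^ 2 := by rw [hQrw]
      _ ≤ (∑ i, (k i) ^ 2) * ∑ i, (∑ j, A i j * k j) ^ 2 :=
          Finset.sum_mul_sq_le_sq_mul_sq Finset.univ k _
      _ ≤ (∑ i, (k i) ^ 2) * (2 * m * ∑ i, (k i) ^ 2) := by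
          refine mul_le_mul_of_nonneg_left ?_ hsk2nn
          calc ∑ i, (∑ j, A i j * k j) ^ 2 ≤ ∑ i, k i * ∑ j, (k j) ^ 2 :=
                Finset.sum_le_sum fun i _ => hrow i
            _ = 2 * m * ∑ j, (k j) ^ 2 := by rw [← Finset.sum_mul, h2m]
  have hQle : Q ≤ 2 * s2 * K * m * sm := by
    have hR0 : 0 ≤ 2 * s2 * K * m * sm := by positivity
    have hS2 : (∑ i, (k i) ^ 2) ^ 2 ≤ (2 * m * K) ^ 2 := by
      have := mul_le_mul hsumk2 hsumk2 hsk2nn (by positivity : (0:ℝ) ≤ 2 * m * K)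
      nlinarith [this]
    have h8 : Q ^ 2 ≤ 2 * m * (2 * m * K) ^ 2 := by
      nlinarith [hQsq, hS2, hm0, hsk2nn]
    have hR2 : (2 * s2 * K * m * sm) ^ 2 = 2 * m * (2 * m * K) ^ 2 := by
      have : (2 * s2 * K * m * sm) ^ 2 = 2 ^ 2 * s2 ^ 2 * K ^ 2 * m ^ 2 * sm ^ 2 := by ring
      rw [this, hs22, hsm2]; ring
    nlinarith [hQ0, hR0, h8, hR2, sq_nonneg (Q - 2 * s2 * K * m * sm),
      sq_nonneg (Q + 2 * s2 * K * m * sm)]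
  -- lower bound for the off-diagonal sum
  have hterm : ∀ i j, A i j - A i j * (k i * k j) / m ≤
      (if i ≠ j then (B i j) ^ 2 else 0) := by
    intro i j
    by_cases h : i = j
    · simp [h, hAdiag]
    · simp only [h, ne_eq, not_false_iff, if_true]
      rw [hB]
      have hexp : (A i j - k i * k j / (2 * m)) ^ 2 =
          A i j ^ 2 - A i j * (k i * k j) / m + (k i * k j / (2 * m)) ^ 2 := by
        field_simp; ring
      rw [hexp, hAsq]
      nlinarith [sq_nonneg (k i * k j / (2 * m))]
  have hSoff : 2 * m - Q / m ≤ ∑ i, ∑ j, if i ≠ j then (B i j) ^ 2 else 0 := by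
    have h1 : ∑ i, ∑ j, (A i j - A i j * (k i * k j) / m) ≤
        ∑ i, ∑ j, if i ≠ j then (B i j) ^ 2 else 0 :=
      Finset.sum_le_sum fun i _ => Finset.sum_le_sum fun j _ => hterm i j
    have h2 : ∑ i, ∑ j, (A i j - A i j * (k i * k j) / m) = 2 * m - Q / m := by
      rw [← hsumA, hQdef, Finset.sum_div, ← Finset.sum_sub_distrib]
      refine Finset.sum_congr rfl fun i _ => ?_
      rw [Finset.sum_div, ← Finset.sum_sub_distrib]
    linarith
  set c := p2 + p2 ^ 2 - 2 * p3 with hcdef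
  have hdiag0 : 0 ≤ (p3 - p2 ^ 2) / m ^ 2 * ∑ i, (B i i) ^ 2 := by
    apply mul_nonneg
    · apply div_nonneg (by linarith) (by positivity)
    · exact Finset.sum_nonneg fun i _ => sq_nonneg _
  have hcm : 0 ≤ c / (2 * m ^ 2) := by positivity
  have hsmm : sm * sm = m := by nlinarith [hsm2]
  have key : Q / (2 * m ^ 3) ≤ s2 * K / (m * sm) := by
    rw [div_le_div_iff₀ (by positivity) (by positivity)]
    have h1 : Q * (m * sm) ≤ (2 * s2 * K * m * sm) * (m * sm) :=
      mul_le_mul_of_nonneg_right hQle (by positivity)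
    have h2 : (2 * s2 * K * m * sm) * (m * sm) = s2 * K * (2 * m ^ 3) := by
      calc (2 * s2 * K * m * sm) * (m * sm) = 2 * s2 * K * m * m * (sm * sm) := by ring
        _ = s2 * K * (2 * m ^ 3) := by rw [hsmm]; ring
    linarith
  calc σn2 ≥ c / (2 * m ^ 2) * (∑ i, ∑ j, if i ≠ j then (B i j) ^ 2 else 0) := by
        rw [hσ]; linarith
    _ ≥ c / (2 * m ^ 2) * (2 * m - Q / m) := mul_le_mul_of_nonneg_left hSoff hcm
    _ = c / m - c * (Q / (2 * m ^ 3)) := by field_simp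
    _ ≥ c / m - c * (s2 * K / (m * sm)) := by nlinarith [key, hpos]
    _ = δn2 * (1 - s2 * K / sm) := by rw [hδ]; field_simp
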